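/- For every real κ with κ > 0 and κ ≠ 2/(3√3), the complex polynomial p(Z) = Z⁴(1 − κZ)² − 1 has degree 6 and exactly six distinct complex roots (i.e. p is separable). -/

import Mathlib

open Polynomial in
/-- For real κ > 0 with κ ≠ 2/(3√3), the complex polynomial p(Z) = Z⁴(1 − κZ)² − 1
has degree 6 and exactly six distinct complex roots. -/
theorem g2_six_distinct_vacua (κ : ℝ) (hκ : 0 < κ) (hκ' : κ ≠ 2 / (3 * Real.sqrt 3)) :
    let p : Polynomial ℂ := X ^ 4 * (1 - C (κ : ℂ) * X) ^ 2 - 1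
    p.natDegree = 6 ∧ p.roots.toFinset.card = 6 := by
  intro p
  have hκ0 : (κ : ℂ) ≠ 0 := by exact_mod_cast hκ.ne'
  have hdeg : p.natDegree = 6 := by
    show (X ^ 4 * (1 - C (κ : ℂ) * X) ^ 2 - 1 : ℂ[X]).natDegree = 6
    compute_degree!
    exact hκ.ne'
  have hp0 : p ≠ 0 := fun h => by simp [h] at hdeg
  -- every root is simple
  have hnodup : p.roots.Nodup := by
    rw [Multiset.nodup_iff_count_le_one]
    intro z
    rw [count_roots]
    by_contra hgt
    push_neg at hgt
    obtain ⟨h0, h1⟩ := (one_lt_rootMultiplicity_iff_isRoot hp0).mp hgt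
    have h0' : z ^ 4 * (1 - κ * z) ^ 2 = 1 := by
      have := h0
      simp only [p, IsRoot, eval_sub, eval_mul, eval_pow, eval_one, eval_X, eval_C,
        sub_eq_zero] at this
      linear_combination this
    have h1' : 4 * z ^ 3 * (1 - κ * z) ^ 2 - 2 * κ * z ^ 4 * (1 - κ * z) = 0 := by
      have := h1
      simp only [p, IsRoot, derivative_sub, derivative_one, derivative_mul, derivative_pow,
        derivative_X, derivative_sub, derivative_C_mul, derivative_C, eval_zero, eval_sub, eval_mul, eval_pow,
        eval_one, eval_X, eval_C, eval_add, eval_natCast] at this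
      push_cast at this ⊢
      linear_combination this
    have hz : z ≠ 0 := by
      intro h; rw [h] at h0'; simp at h0'
    have hu : (1 : ℂ) - κ * z ≠ 0 := by
      intro h; rw [h] at h0'; simp at h0'
    have hfac : z ^ 3 * (1 - κ * z) * (4 - 6 * κ * z) = 0 := by ring_nf; linear_combination h1'
    have h46 : (4 : ℂ) - 6 * κ * z = 0 := by
      rcases mul_eq_zero.mp hfac with h | h
      · rcases mul_eq_zero.mp h with h | h
        · exact absurd (pow_eq_zero_iff (by norm_num)|>.mp h) hz
        · exact absurd h hu
      · exact h
    have hkz : (κ : ℂ) * z = 2 / 3 := by linear_combination (-1/6 : ℂ) * h46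
    have h3 : (1 : ℂ) - κ * z = 1 / 3 := by linear_combination (-1 : ℂ) * hkz
    have hz4 : z ^ 4 = 9 := by
      rw [h3] at h0'
      linear_combination (9 : ℂ) * h0'
    have hκ4 : 729 * (κ : ℂ) ^ 4 = 16 := by
      linear_combination (81 * (κ:ℂ)^3 * z^3 + 54 * (κ:ℂ)^2 * z^2 + 36 * (κ:ℂ) * z + 24) * hkz
        - 81 * (κ:ℂ)^4 * hz4
    have hκ4R : κ ^ 4 = 16 / 729 := by
      have : ((729 * κ ^ 4 : ℝ) : ℂ) = ((16 : ℝ) : ℂ) := by push_cast; exact hκ4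
      have h3 : 729 * κ ^ 4 = 16 := by exact_mod_cast this
      linarith
    have hκ2 : κ ^ 2 = 4 / 27 := by nlinarith [sq_nonneg (κ^2 + 4/27), sq_nonneg κ]
    apply hκ'
    have hs : Real.sqrt 3 > 0 := Real.sqrt_pos.mpr (by norm_num)
    have hsq : (2 / (3 * Real.sqrt 3)) ^ 2 = 4 / 27 := by
      rw [div_pow, mul_pow, Real.sq_sqrt (by norm_num : (3:ℝ) ≥ 0)]
      norm_num
    nlinarith [mul_pos hκ (div_pos (by norm_num : (0:ℝ)<2) (by positivity : (0:ℝ) < 3 * Real.sqrt 3))]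
  -- count roots
  have hsplits : p.Splits := IsAlgClosed.splits p
  have hcard : p.roots.card = 6 := by
    have := (Polynomial.splits_iff_card_roots).mp hsplits
    omega
  exact ⟨hdeg, by rw [Multiset.toFinset_card_of_nodup hnodup, hcard]⟩
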